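/- (Marginal probability formula for Partition-DPP.) Let $A \in \mathbb{R}^{m \times n}$, let $[m] = \mathcal{P}_1 \uplus \cdots \uplus \mathcal{P}_p$ with $|\mathcal{P}_l| = m_l$, and fix targets $0 \le k_l \le m_l$ with $k = \sum_l k_l$. Let $S \subseteq [m]$ with $|S| = t$, $|S \cap \mathcal{P}_l| = t_l \le k_l$ for all $l$, and $\det(A_S A_S^T) > 0$. Fix $j$ with $t_j < k_j$ and $i \in \mathcal{P}_j \setminus S$; let $B = A - \pi_S(A)$ with rows $b_1,\dots,b_m$ and $C_i = B - \pi_{\{i\}}(B)$. Assume the denominator below is nonzero. Then $\dfrac{\sum_{T \in \mathcal{C}_1} \det(A_{S \cup \{i\} \cup T} A_{S \cup \{i\} \cup T}^T)}{\sum_{T \in \mathcal{C}_2} \det(A_{S \cup T} A_{S \cup T}^T)} = \dfrac{\|b_i\|^2 \, |c'(C_i C_i^T)|}{|c''(B B^T)|}$, where $\mathcal{C}_1$ is the family of $T \subseteq [m] \setminus (S \cup \{i\})$ with $|T \cap \mathcal{P}_j| = k_j - t_j - 1$ and $|T \cap \mathcal{P}_l| = k_l - t_l$ for $l \ne j$,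 $\mathcal{C}_2$ is the family of $T \subseteq [m] \setminus S$ with $|T \cap \mathcal{P}_l| = k_l - t_l$ for all $l$, $c'(C_i C_i^T) = c_{m_1-k_1+t_1, \dots, m_j-k_j+t_j+1, \dots, m_p-k_p+t_p}(C_i C_i^T)$, and $c''(B B^T) = c_{m_1-k_1+t_1, \dots, m_p-k_p+t_p}(B B^T)$. -/

import Mathlib

/-- `res v S` is the matrix `B = v - π_S(v)`: its `i`-th row is the component of the `i`-th
row `v i` orthogonal to the span of the rows of `v` indexed by `S`. -/
noncomputable def res {m n : ℕ} (v : Fin m → EuclideanSpace ℝ (Fin n)) (S : Finset (Fin m)) :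
    Fin m → EuclideanSpace ℝ (Fin n) :=
  fun i => v i - (Submodule.orthogonalProjectionOnto (Submodule.span ℝ (v '' (S : Set (Fin m)))) (v i) :
    EuclideanSpace ℝ (Fin n))

/-- `gramDet v S = det(v_S v_S^T)`: the determinant of the Gram matrix of the rows of `v`
indexed by `S`. -/
noncomputable def gramDet {m n : ℕ} (v : Fin m → EuclideanSpace ℝ (Fin n))
    (S : Finset (Fin m)) : ℝ :=
  Matrix.det (Matrix.of fun i j : {x // x ∈ S} => (inner ℝ (v i.1) (v j.1) : ℝ))

/-- `gram v = v vᵀ`, the Gram matrix of the rows of `v`. -/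
noncomputable def gram {m n : ℕ} (v : Fin m → EuclideanSpace ℝ (Fin n)) :
    Matrix (Fin m) (Fin m) ℝ :=
  Matrix.of fun i j => (inner ℝ (v i) (v j) : ℝ)

/-- The coefficient `c_{e₁,…,e_p}(M)` of the monomial `x₁^{e₁} ⋯ x_p^{e_p}` in the multivariate
characteristic polynomial `det(M - x₁I₁ - ⋯ - x_pI_p)`, where the partition
`[m] = 𝒫₁ ⊎ ⋯ ⊎ 𝒫_p` is encoded by the labelling function `part` (so `𝒫_l = part⁻¹(l)`),
and `I_l` is the diagonal 0/1 matrix supported on `𝒫_l`. -/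
noncomputable def mcharCoeff {m p : ℕ} (M : Matrix (Fin m) (Fin m) ℝ) (part : Fin m → Fin p)
    (e : Fin p → ℕ) : ℝ :=
  MvPolynomial.coeff (Finsupp.equivFunOnFinite.symm e)
    (Matrix.det (Matrix.of fun i j =>
      MvPolynomial.C (M i j) - (if i = j then MvPolynomial.X (part i) else 0)))


open Finset

/-- principal minor of `M` on the index set `U`. -/
noncomputable def pminor {R : Type*} [CommRing R] {m : ℕ} (M : Matrix (Fin m) (Fin m) R)
    (U : Finset (Fin m)) : R :=
  (Matrix.of fun i j : {x // x ∈ U} => M i.1 j.1).det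

lemma det_add_diagonal {R : Type*} [CommRing R] {m : ℕ}
    (M : Matrix (Fin m) (Fin m) R) (d : Fin m → R) :
    (M + Matrix.diagonal d).det
      = ∑ U : Finset (Fin m), (∏ i ∈ Uᶜ, d i) * pminor M U := by
  classical
  have key : ∀ W : Finset (Fin m),
      (∑ σ ∈ univ.filter (fun σ : Equiv.Perm (Fin m) => ∀ i ∈ W, σ i = i),
        ((Equiv.Perm.sign σ : ℤ) : R) * ∏ i ∈ Wᶜ, M (σ i) i) = pminor M Wᶜ := by
    intro W
    have hiff : ∀ σ : Equiv.Perm (Fin m), (∀ i ∈ W, σ i = i) →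
        ∀ x : Fin m, x ∈ Wᶜ ↔ σ x ∈ Wᶜ := by
      intro σ hσ x
      simp only [Finset.mem_compl]
      constructor
      · intro hx hc
        have h2 : σ (σ x) = σ x := hσ _ hc
        have h3 : σ x = x := σ.injective h2
        exact hx (h3 ▸ hc)
      · intro hx hc
        rw [hσ x hc] at hx
        exact hx hc
    rw [pminor, Matrix.det_apply']
    symm
    refine Finset.sum_bij' (fun (τ : Equiv.Perm {x // x ∈ Wᶜ}) _ => Equiv.Perm.ofSubtype τ)
      (fun σ hσ => σ.subtypePerm (fun x => (hiff σ (by simpa using (Finset.mem_filter.1 hσ).2) x).symm))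
      ?_ ?_ ?_ ?_ ?_
    · intro τ _
      simp only [Finset.mem_filter, Finset.mem_univ, true_and]
      intro x hx
      exact Equiv.Perm.ofSubtype_apply_of_not_mem τ (by simpa using hx)
    · intro σ hσ
      exact Finset.mem_univ _
    · intro τ _
      exact Equiv.Perm.subtypePerm_ofSubtype τ
    · intro σ hσ
      refine Equiv.Perm.ofSubtype_subtypePerm _ fun x hne => ?_
      by_contra hx
      exact hne ((Finset.mem_filter.1 hσ).2 x (by simpa using hx))
    · intro τ _
      congr 1
      · rw [Equiv.Perm.sign_ofSubtype τ]
      · rw [Finset.prod_subtype Wᶜ (fun x => Iff.rfl)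
          (fun i => M (Equiv.Perm.ofSubtype τ i) i)]
        refine Finset.prod_congr rfl fun u _ => ?_
        rw [Matrix.of_apply, Equiv.Perm.ofSubtype_apply_coe]
  calc (M + Matrix.diagonal d).det
      = ∑ σ : Equiv.Perm (Fin m), ∑ W : Finset (Fin m),
          ((Equiv.Perm.sign σ : ℤ) : R) *
            ((∏ i ∈ W, if σ i = i then d i else 0) * ∏ i ∈ Wᶜ, M (σ i) i) := by
        rw [Matrix.det_apply']
        refine Finset.sum_congr rfl fun σ _ => ?_
        rw [← Finset.mul_sum]
        congr 1
        rw [← Fintype.prod_add]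
        refine Finset.prod_congr rfl fun x _ => ?_
        by_cases h : σ x = x
        · simp [Matrix.diagonal_apply, h, add_comm]
        · simp [Matrix.diagonal_apply, h]
    _ = ∑ W : Finset (Fin m), ∑ σ : Equiv.Perm (Fin m),
          ((Equiv.Perm.sign σ : ℤ) : R) *
            ((∏ i ∈ W, if σ i = i then d i else 0) * ∏ i ∈ Wᶜ, M (σ i) i) :=
        Finset.sum_comm
    _ = ∑ W : Finset (Fin m), (∏ i ∈ W, d i) * pminor M Wᶜ := by
        refine Finset.sum_congr rfl fun W _ => ?_
        have h2 : ∀ σ : Equiv.Perm (Fin m),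
            (∏ i ∈ W, if σ i = i then d i else (0 : R)) =
              if (∀ i ∈ W, σ i = i) then ∏ i ∈ W, d i else 0 := by
          intro σ
          by_cases h : ∀ i ∈ W, σ i = i
          · rw [if_pos h]
            exact Finset.prod_congr rfl fun i hi => by rw [if_pos (h i hi)]
          · rw [if_neg h]
            push_neg at h
            obtain ⟨i, hi, hne⟩ := h
            exact Finset.prod_eq_zero hi (by rw [if_neg hne])
        rw [← key W, Finset.sum_filter, Finset.mul_sum]
        refine Finset.sum_congr rfl fun σ _ => ?_
        rw [h2]
        by_cases h : ∀ i ∈ W, σ i = i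
        · rw [if_pos h, if_pos h]; ring
        · rw [if_neg h, if_neg h]; ring
    _ = ∑ U : Finset (Fin m), (∏ i ∈ Uᶜ, d i) * pminor M U := by
        refine Fintype.sum_equiv (Function.Involutive.toPerm _ compl_involutive)
          _ _ fun W => ?_
        simp [Function.Involutive.toPerm]


lemma mcharCoeff_eq {m p : ℕ} (M : Matrix (Fin m) (Fin m) ℝ) (part : Fin m → Fin p)
    (e : Fin p → ℕ) :
    mcharCoeff M part e = (-1 : ℝ) ^ (∑ l, e l) *
      ∑ U ∈ Finset.univ.filter (fun U : Finset (Fin m) =>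
        ∀ l, ((Uᶜ).filter (fun x => part x = l)).card = e l), pminor M U := by
  classical
  have hmat : (Matrix.of fun i j => MvPolynomial.C (M i j) -
      (if i = j then MvPolynomial.X (part i) else (0 : MvPolynomial (Fin p) ℝ))) =
      M.map MvPolynomial.C + Matrix.diagonal fun i => -MvPolynomial.X (part i) := by
    ext i j
    by_cases h : i = j
    · subst h
      simp [sub_eq_add_neg]
    · simp [Matrix.diagonal_apply_ne _ h, h]
  rw [mcharCoeff, hmat, det_add_diagonal, MvPolynomial.coeff_sum]
  have hterm : ∀ U : Finset (Fin m),
      MvPolynomial.coeff (Finsupp.equivFunOnFinite.symm e)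
        ((∏ i ∈ Uᶜ, -MvPolynomial.X (part i)) * pminor (M.map (MvPolynomial.C : ℝ →+* MvPolynomial (Fin p) ℝ)) U)
      = if (∀ l, ((Uᶜ).filter (fun x => part x = l)).card = e l) then
          (-1 : ℝ) ^ (Uᶜ).card * pminor M U else 0 := by
    intro U
    have hpm : pminor (M.map (MvPolynomial.C : ℝ →+* MvPolynomial (Fin p) ℝ)) U
        = MvPolynomial.C (pminor M U) := by
      rw [pminor, pminor, RingHom.map_det]
      congr 1
    set cU : Fin p → ℕ := fun l => ((Uᶜ).filter (fun x => part x = l)).card with hcU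
    set ff : Fin p →₀ ℕ := Finsupp.equivFunOnFinite.symm cU with hff
    have hprod : (∏ i ∈ Uᶜ, -MvPolynomial.X (part i) : MvPolynomial (Fin p) ℝ)
        = (-1 : MvPolynomial (Fin p) ℝ) ^ (Uᶜ).card * MvPolynomial.monomial ff 1 := by
      have h1 : (∏ i ∈ Uᶜ, -MvPolynomial.X (part i) : MvPolynomial (Fin p) ℝ) =
          (-1) ^ (Uᶜ).card * ∏ i ∈ Uᶜ, MvPolynomial.X (part i) := by
        rw [← Finset.prod_const, ← Finset.prod_mul_distrib]
        exact Finset.prod_congr rfl fun i _ => by ring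
      rw [h1]
      congr 1
      rw [← Finset.prod_fiberwise_of_maps_to (fun x _ => Finset.mem_univ (part x))
        (fun i => (MvPolynomial.X (part i) : MvPolynomial (Fin p) ℝ))]
      have h2 : ∀ l : Fin p,
          (∏ i ∈ (Uᶜ).filter (fun x => part x = l),
            (MvPolynomial.X (part i) : MvPolynomial (Fin p) ℝ))
          = MvPolynomial.X l ^ ff l := by
        intro l
        have : ff l = cU l := by simp [hff]
        rw [this, hcU, ← Finset.prod_const]
        exact Finset.prod_congr rfl fun x hx => by rw [(Finset.mem_filter.1 hx).2]
      rw [Finset.prod_congr rfl fun l _ => h2 l]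
      rw [← MvPolynomial.prod_X_pow_eq_monomial]
      exact (Finset.prod_subset (Finset.subset_univ _) fun l _ hl => by
        rw [Finsupp.notMem_support_iff.1 hl, pow_zero]).symm
    rw [hprod, hpm, mul_assoc, mul_comm (MvPolynomial.monomial ff 1), MvPolynomial.C_mul_monomial,
      mul_one]
    rw [show ((-1 : MvPolynomial (Fin p) ℝ) ^ (Uᶜ).card) = MvPolynomial.C ((-1 : ℝ) ^ (Uᶜ).card) by
      rw [map_pow, map_neg, map_one]]
    rw [MvPolynomial.coeff_C_mul, MvPolynomial.coeff_monomial]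
    by_cases hcond : ∀ l, ((Uᶜ).filter (fun x => part x = l)).card = e l
    · rw [if_pos hcond, if_pos]
      rw [hff]
      exact congrArg _ (funext fun l => hcond l)
    · rw [if_neg hcond, if_neg, mul_zero]
      intro hEq
      exact hcond fun l => congrFun (Finsupp.equivFunOnFinite.symm.injective hEq) l
  rw [Finset.sum_congr rfl fun U _ => hterm U, ← Finset.sum_filter, Finset.mul_sum]
  refine Finset.sum_congr rfl fun U hU => ?_
  have hU' := (Finset.mem_filter.1 hU).2
  have hcc : (Uᶜ).card = ∑ l, e l := by
    rw [Finset.card_eq_sum_card_fiberwise (fun x (_ : x ∈ Uᶜ) => Finset.mem_univ (part x))]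
    exact Finset.sum_congr rfl fun l _ => hU' l
  rw [hcc]

lemma gramDet_nonneg {m n : ℕ} (w : Fin m → EuclideanSpace ℝ (Fin n)) (U : Finset (Fin m)) :
    0 ≤ gramDet w U := by
  classical
  set B : Matrix (Fin n) {x // x ∈ U} ℝ := Matrix.of fun a u => w u.1 a with hB
  have hG : (Matrix.of fun i j : {x // x ∈ U} => (inner ℝ (w i.1) (w j.1) : ℝ)) = B.conjTranspose * B := by
    ext u u'
    simp [Matrix.mul_apply, hB, Matrix.conjTranspose_apply, PiLp.inner_apply,
      RCLike.inner_apply, conj_trivial, mul_comm]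
  have hPSD := Matrix.posSemidef_conjTranspose_mul_self B
  rw [gramDet, hG, hPSD.1.det_eq_prod_eigenvalues]
  exact Finset.prod_nonneg fun i _ => by
    simpa using hPSD.eigenvalues_nonneg i

lemma inner_res_right {m n : ℕ} (v : Fin m → EuclideanSpace ℝ (Fin n)) (S : Finset (Fin m))
    {x : EuclideanSpace ℝ (Fin n)} (hx : x ∈ Submodule.span ℝ (v '' (S : Set (Fin m))))
    (t : Fin m) : (inner ℝ x (res v S t) : ℝ) = 0 := by
  have h := Submodule.sub_starProjection_mem_orthogonal
    (K := Submodule.span ℝ (v '' (S : Set (Fin m)))) (v t)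
  exact (Submodule.mem_orthogonal _ _).1 h x hx

lemma res_eq_zero {m n : ℕ} (v : Fin m → EuclideanSpace ℝ (Fin n)) {S : Finset (Fin m)}
    {s : Fin m} (hs : s ∈ S) : res v S s = 0 := by
  have hmem : v s ∈ Submodule.span ℝ (v '' (S : Set (Fin m))) :=
    Submodule.subset_span ⟨s, hs, rfl⟩
  have h := Submodule.orthogonalProjectionOnto_mem_subspace_eq_self
    (K := Submodule.span ℝ (v '' (S : Set (Fin m)))) ⟨v s, hmem⟩
  show v s - _ = 0
  rw [sub_eq_zero]
  exact (congrArg Subtype.val h).symm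

lemma gramDet_singleton {m n : ℕ} (v : Fin m → EuclideanSpace ℝ (Fin n)) (i : Fin m) :
    gramDet v {i} = ‖v i‖ ^ 2 := by
  haveI hu : Unique {x // x ∈ ({i} : Finset (Fin m))} :=
    ⟨⟨⟨i, Finset.mem_singleton_self i⟩⟩, fun x => Subtype.ext (Finset.mem_singleton.1 x.2)⟩
  rw [gramDet, Matrix.det_unique, Matrix.of_apply]
  have hd : ((default : {x // x ∈ ({i} : Finset (Fin m))}) : Fin m) = i :=
    Finset.mem_singleton.1 (default : {x // x ∈ ({i} : Finset (Fin m))}).2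
  rw [hd]
  exact real_inner_self_eq_norm_sq (v i)

lemma gramDet_eq_zero {m n : ℕ} {w : Fin m → EuclideanSpace ℝ (Fin n)} {U : Finset (Fin m)}
    {u : Fin m} (hu : u ∈ U) (hzero : w u = 0) : gramDet w U = 0 := by
  apply Matrix.det_eq_zero_of_row_eq_zero ⟨u, hu⟩
  intro j
  simp [hzero]

lemma gramDet_union {m n : ℕ} (v : Fin m → EuclideanSpace ℝ (Fin n)) (S T : Finset (Fin m))
    (hST : Disjoint S T) :
    gramDet v (S ∪ T) = gramDet v S * gramDet (res v S) T := by
  classical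
  set K := Submodule.span ℝ (v '' (S : Set (Fin m))) with hK
  have hproj : ∀ x : Fin m, ∃ l ∈ Finsupp.supported ℝ ℝ (S : Set (Fin m)),
      Finsupp.linearCombination ℝ v l =
        (K.orthogonalProjectionOnto (v x) : EuclideanSpace ℝ (Fin n)) := by
    intro x
    exact (Finsupp.mem_span_image_iff_linearCombination ℝ).1
      ((K.orthogonalProjectionOnto (v x)).2)
  choose c hcS hcEq using hproj
  have hcS' : ∀ x : Fin m, (c x).support ⊆ S := fun x => (Finsupp.mem_supported ℝ (c x)).1 (hcS x)
  have hdis : ∀ x : Fin m, x ∈ T → x ∉ S := fun x hx hs => Finset.disjoint_left.1 hST hs hx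
  set w : Fin m → EuclideanSpace ℝ (Fin n) := fun x => if x ∈ S then v x else res v S x with hw
  let q : {x // x ∈ S ∪ T} ≃ {x // x ∈ S} ⊕ {x // x ∈ T} :=
    { toFun := fun x => if h : x.1 ∈ S then Sum.inl ⟨x.1, h⟩ else
        Sum.inr ⟨x.1, (Finset.mem_union.1 x.2).resolve_left h⟩
      invFun := fun y => y.elim (fun s => ⟨s.1, Finset.mem_union_left _ s.2⟩)
        (fun t => ⟨t.1, Finset.mem_union_right _ t.2⟩)
      left_inv := fun x => by
        by_cases h : x.1 ∈ S <;> simp [h]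
      right_inv := fun y => by
        rcases y with s | t
        · simp [s.2]
        · simp [hdis t.1 t.2] }
  set G : Matrix {x // x ∈ S ∪ T} {x // x ∈ S ∪ T} ℝ :=
    Matrix.of (fun x y => (inner ℝ (v x.1) (v y.1) : ℝ)) with hG
  set Gw : Matrix {x // x ∈ S ∪ T} {x // x ∈ S ∪ T} ℝ :=
    Matrix.of (fun x y => (inner ℝ (w x.1) (w y.1) : ℝ)) with hGw
  set L : Matrix {x // x ∈ S ∪ T} {x // x ∈ S ∪ T} ℝ :=
    Matrix.of (fun x y => (if x = y then 1 else 0) - (if x.1 ∈ S then 0 else c x.1 y.1)) with hL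
  have hwsum : ∀ x : {x // x ∈ S ∪ T}, w x.1 = ∑ y : {x // x ∈ S ∪ T}, L x y • v y.1 := by
    intro x
    by_cases h : x.1 ∈ S
    · have hterm : ∀ y : {x // x ∈ S ∪ T}, L x y • v y.1 =
          (if x = y then (1:ℝ) else 0) • v y.1 := by
        intro y
        simp [hL, h]
      rw [Finset.sum_congr rfl fun y _ => hterm y]
      rw [Finset.sum_eq_single x (fun y _ hy => by rw [if_neg (Ne.symm hy), zero_smul])
        (fun hx => absurd (Finset.mem_univ x) hx)]
      simp [hw, h]
    · have hterm : ∀ y : {x // x ∈ S ∪ T}, L x y • v y.1 =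
          (if x = y then (1:ℝ) else 0) • v y.1 - c x.1 y.1 • v y.1 := by
        intro y
        simp only [hL, Matrix.of_apply, if_neg h, sub_smul]
      rw [Finset.sum_congr rfl fun y _ => hterm y, Finset.sum_sub_distrib]
      rw [Finset.sum_eq_single x (fun y _ hy => by rw [if_neg (Ne.symm hy), zero_smul])
        (fun hx => absurd (Finset.mem_univ x) hx)]
      rw [if_pos rfl, one_smul]
      have hsum : (∑ y : {x // x ∈ S ∪ T}, c x.1 y.1 • v y.1) =
          Finsupp.linearCombination ℝ v (c x.1) := by
        rw [Finsupp.linearCombination_apply, Finsupp.sum]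
        rw [Finset.sum_coe_sort (S ∪ T) (fun y => c x.1 y • v y)]
        exact (Finset.sum_subset ((hcS' x.1).trans Finset.subset_union_left)
          (fun y _ hy => by rw [Finsupp.notMem_support_iff.1 hy, zero_smul])).symm
      rw [hsum, hcEq]
      simp [hw, if_neg h, res, hK]
  have hGwLGL : Gw = L * G * L.transpose := by
    ext x z
    calc Gw x z = ∑ y : {x // x ∈ S ∪ T}, ∑ y' : {x // x ∈ S ∪ T},
          L x y * G y y' * L z y' := by
          show (inner ℝ (w x.1) (w z.1) : ℝ) = _
          rw [hwsum x, hwsum z, sum_inner]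
          refine Finset.sum_congr rfl fun y _ => ?_
          rw [real_inner_smul_left, inner_sum, Finset.mul_sum]
          refine Finset.sum_congr rfl fun y' _ => ?_
          rw [real_inner_smul_right]
          simp only [hG, Matrix.of_apply]
          ring
      _ = (L * G * L.transpose) x z := by
          simp only [Matrix.mul_apply, Matrix.transpose_apply, Finset.sum_mul]
          rw [Finset.sum_comm]
  have hdetL : L.det = 1 := by
    rw [← Matrix.det_submatrix_equiv_self q.symm L]
    have hLblocks : L.submatrix q.symm q.symm =
        Matrix.fromBlocks 1 0
          (Matrix.of fun (t : {x // x ∈ T}) (s : {x // x ∈ S}) => - c t.1 s.1) 1 := by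
      ext a b
      rcases a with a | a <;> rcases b with b | b
      · show L ⟨a.1, _⟩ ⟨b.1, _⟩ = (1 : Matrix {x // x ∈ S} {x // x ∈ S} ℝ) a b
        simp only [hL, Matrix.of_apply, if_pos a.2, sub_zero, Matrix.one_apply,
          Subtype.mk.injEq, Subtype.ext_iff]
      · show L ⟨a.1, _⟩ ⟨b.1, _⟩ = (0 : Matrix {x // x ∈ S} {x // x ∈ T} ℝ) a b
        have hne : a.1 ≠ b.1 := fun hEq => hdis b.1 b.2 (hEq ▸ a.2)
        simp only [hL, Matrix.of_apply, if_pos a.2, sub_zero, Matrix.zero_apply]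
        have hne' : (⟨a.1, Finset.mem_union_left T a.2⟩ : {x // x ∈ S ∪ T}) ≠
            ⟨b.1, Finset.mem_union_right S b.2⟩ := fun hEq => hne (congrArg Subtype.val hEq)
        exact if_neg hne'
      · show L ⟨a.1, _⟩ ⟨b.1, _⟩ = - c a.1 b.1
        have haS : a.1 ∉ S := hdis a.1 a.2
        have hne : a.1 ≠ b.1 := fun hEq => haS (hEq ▸ b.2)
        simp only [hL, Matrix.of_apply, if_neg haS]
        have hne' : (⟨a.1, Finset.mem_union_right S a.2⟩ : {x // x ∈ S ∪ T}) ≠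
            ⟨b.1, Finset.mem_union_left T b.2⟩ := fun hEq => hne (congrArg Subtype.val hEq)
        rw [if_neg hne', zero_sub]
      · show L ⟨a.1, _⟩ ⟨b.1, _⟩ = (1 : Matrix {x // x ∈ T} {x // x ∈ T} ℝ) a b
        have haS : a.1 ∉ S := hdis a.1 a.2
        have hbS : b.1 ∉ S := hdis b.1 b.2
        have hc0 : c a.1 b.1 = 0 := Finsupp.notMem_support_iff.1 (fun hmem => hbS (hcS' a.1 hmem))
        simp only [hL, Matrix.of_apply, if_neg haS, hc0, sub_zero, Matrix.one_apply,
          Subtype.mk.injEq, Subtype.ext_iff]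
    rw [hLblocks, Matrix.det_fromBlocks_zero₁₂, Matrix.det_one, Matrix.det_one, mul_one]
  have hGwblocks : Gw.submatrix q.symm q.symm = Matrix.fromBlocks
      (Matrix.of fun i j : {x // x ∈ S} => (inner ℝ (v i.1) (v j.1) : ℝ)) 0 0
      (Matrix.of fun i j : {x // x ∈ T} => (inner ℝ (res v S i.1) (res v S j.1) : ℝ)) := by
    ext a b
    rcases a with a | a <;> rcases b with b | b
    · show (inner ℝ (w a.1) (w b.1) : ℝ) = (inner ℝ (v a.1) (v b.1) : ℝ)
      simp [hw, if_pos a.2, if_pos b.2]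
    · show (inner ℝ (w a.1) (w b.1) : ℝ) = (0 : Matrix {x // x ∈ S} {x // x ∈ T} ℝ) a b
      have hbS : b.1 ∉ S := hdis b.1 b.2
      have : w a.1 = v a.1 := by simp [hw, if_pos a.2]
      have hb : w b.1 = res v S b.1 := by simp [hw, if_neg hbS]
      rw [this, hb, Matrix.zero_apply]
      exact inner_res_right v S (Submodule.subset_span ⟨a.1, a.2, rfl⟩) b.1
    · show (inner ℝ (w a.1) (w b.1) : ℝ) = (0 : Matrix {x // x ∈ T} {x // x ∈ S} ℝ) a b
      have haS : a.1 ∉ S := hdis a.1 a.2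
      have ha : w a.1 = res v S a.1 := by simp [hw, if_neg haS]
      have hb : w b.1 = v b.1 := by simp [hw, if_pos b.2]
      rw [ha, hb, Matrix.zero_apply, real_inner_comm]
      exact inner_res_right v S (Submodule.subset_span ⟨b.1, b.2, rfl⟩) a.1
    · show (inner ℝ (w a.1) (w b.1) : ℝ) = (inner ℝ (res v S a.1) (res v S b.1) : ℝ)
      have haS : a.1 ∉ S := hdis a.1 a.2
      have hbS : b.1 ∉ S := hdis b.1 b.2
      simp [hw, if_neg haS, if_neg hbS]
  have h2 : Gw.det = G.det := by
    rw [hGwLGL, Matrix.det_mul, Matrix.det_mul, hdetL, Matrix.det_transpose, hdetL]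
    ring
  have h3 : Gw.det = gramDet v S * gramDet (res v S) T := by
    rw [← Matrix.det_submatrix_equiv_self q.symm Gw, hGwblocks,
      Matrix.det_fromBlocks_zero₁₂]
    rfl
  show G.det = _
  rw [← h2, h3]

lemma sum_gramDet_eq_abs {m n p : ℕ} (w : Fin m → EuclideanSpace ℝ (Fin n))
    (part : Fin m → Fin p) (e g : Fin p → ℕ) (E : Finset (Fin m))
    (hw : ∀ x ∈ E, w x = 0)
    (hprof : ∀ U : Finset (Fin m),
      (∀ l, ((Uᶜ).filter (fun x => part x = l)).card = e l) ↔
      (∀ l, (U.filter (fun x => part x = l)).card = g l)) :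
    |mcharCoeff (gram w) part e| =
      ∑ T ∈ Finset.univ.filter (fun T : Finset (Fin m) =>
        T ⊆ Eᶜ ∧ ∀ l, (T.filter (fun x => part x = l)).card = g l), gramDet w T := by
  classical
  have hpg : ∀ U : Finset (Fin m), pminor (gram w) U = gramDet w U := fun U => rfl
  have h1 : |mcharCoeff (gram w) part e| =
      ∑ U ∈ Finset.univ.filter (fun U : Finset (Fin m) =>
        ∀ l, ((Uᶜ).filter (fun x => part x = l)).card = e l), gramDet w U := by
    rw [mcharCoeff_eq, abs_mul, abs_pow, abs_neg, abs_one, one_pow, one_mul,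
      Finset.sum_congr rfl fun U _ => hpg U,
      abs_of_nonneg (Finset.sum_nonneg fun U _ => gramDet_nonneg w U)]
  rw [h1]
  rw [← Finset.sum_filter_add_sum_filter_not
    (Finset.univ.filter (fun U : Finset (Fin m) =>
      ∀ l, ((Uᶜ).filter (fun x => part x = l)).card = e l)) (fun U => U ⊆ Eᶜ) (gramDet w)]
  have hz : ∑ U ∈ (Finset.univ.filter (fun U : Finset (Fin m) =>
      ∀ l, ((Uᶜ).filter (fun x => part x = l)).card = e l)).filter (fun U => ¬ U ⊆ Eᶜ),
      gramDet w U = 0 := by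
    refine Finset.sum_eq_zero fun U hU => ?_
    have h := (Finset.mem_filter.1 hU).2
    obtain ⟨u, hu1, hu2⟩ := Finset.not_subset.1 h
    exact gramDet_eq_zero hu1 (hw u (by simpa using hu2))
  rw [hz, add_zero, Finset.filter_filter]
  refine Finset.sum_congr ?_ fun _ _ => rfl
  apply Finset.filter_congr
  intro U _
  constructor
  · rintro ⟨h1', h2'⟩
    exact ⟨h2', (hprof U).1 h1'⟩
  · rintro ⟨h1', h2'⟩
    exact ⟨(hprof U).2 h2', h1'⟩

/-- marginal probability formula for Partition-DPP: with partition
`[m] = 𝒫₁ ⊎ ⋯ ⊎ 𝒫_p` (`|𝒫_l| = m_l`), targets `k_l ≤ m_l`, a set `S` with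
`|S ∩ 𝒫_l| = t_l ≤ k_l` and `det(A_S A_S^T) > 0`, an index `j` with `t_j < k_j`, and
`i ∈ 𝒫_j \ S`; letting `B = A - π_S(A)` and `C_i = B - π_{{i}}(B)`, and assuming the
denominator is nonzero,
`(∑_{T ∈ 𝒞₁} det(A_{S∪{i}∪T} A_{S∪{i}∪T}^T)) / (∑_{T ∈ 𝒞₂} det(A_{S∪T} A_{S∪T}^T))
  = ‖b_i‖² |c'(C_i C_i^T)| / |c''(B B^T)|`,
where `𝒞₁` is the family of `T ⊆ [m] \ (S∪{i})` with `|T ∩ 𝒫_j| = k_j - t_j - 1` and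
`|T ∩ 𝒫_l| = k_l - t_l` for `l ≠ j`, `𝒞₂` is the family of `T ⊆ [m] \ S` with
`|T ∩ 𝒫_l| = k_l - t_l` for all `l`,
`c' = c_{m₁-k₁+t₁, …, m_j-k_j+t_j+1, …, m_p-k_p+t_p}`, and
`c'' = c_{m₁-k₁+t₁, …, m_p-k_p+t_p}`. -/
theorem statement8 {m n p : ℕ} (A : Fin m → EuclideanSpace ℝ (Fin n)) (part : Fin m → Fin p)
    (mi ki ti : Fin p → ℕ)
    (hmi : ∀ l, (Finset.univ.filter (fun x => part x = l)).card = mi l)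
    (hki : ∀ l, ki l ≤ mi l)
    (S : Finset (Fin m))
    (hti : ∀ l, (S.filter (fun x => part x = l)).card = ti l)
    (htk : ∀ l, ti l ≤ ki l)
    (hSpos : 0 < gramDet A S)
    (j : Fin p) (hj : ti j < ki j)
    (i : Fin m) (hij : part i = j) (hiS : i ∉ S)
    (hden : (∑ T ∈ Finset.univ.filter (fun T : Finset (Fin m) =>
        T ⊆ Sᶜ ∧ ∀ l, (T.filter (fun x => part x = l)).card = ki l - ti l),
        gramDet A (S ∪ T)) ≠ 0) :
    (∑ T ∈ Finset.univ.filter (fun T : Finset (Fin m) =>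
        T ⊆ (insert i S)ᶜ ∧ ∀ l, (T.filter (fun x => part x = l)).card =
          (if l = j then ki j - ti j - 1 else ki l - ti l)),
        gramDet A (insert i (S ∪ T)))
      / (∑ T ∈ Finset.univ.filter (fun T : Finset (Fin m) =>
          T ⊆ Sᶜ ∧ ∀ l, (T.filter (fun x => part x = l)).card = ki l - ti l),
          gramDet A (S ∪ T))
      = ‖res A S i‖ ^ 2 *
          |mcharCoeff (gram (res (res A S) {i})) part
            (fun l => if l = j then mi j - ki j + ti j + 1 else mi l - ki l + ti l)|
        / |mcharCoeff (gram (res A S)) part (fun l => mi l - ki l + ti l)| := by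
  classical
  have hgS : gramDet A S ≠ 0 := ne_of_gt hSpos
  have hcard : ∀ (U : Finset (Fin m)) (l : Fin p),
      (U.filter (fun x => part x = l)).card + ((Uᶜ).filter (fun x => part x = l)).card = mi l := by
    intro U l
    rw [← hmi l, ← Finset.card_union_of_disjoint
      (Finset.disjoint_filter_filter disjoint_compl_right), ← Finset.filter_union,
      Finset.union_compl]
  have hprofD : ∀ U : Finset (Fin m),
      (∀ l, ((Uᶜ).filter (fun x => part x = l)).card = mi l - ki l + ti l) ↔
      (∀ l, (U.filter (fun x => part x = l)).card = ki l - ti l) := by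
    intro U
    constructor <;> intro h l <;>
      (have h1 := hcard U l; have h2 := h l; have h3 := hki l; have h4 := htk l; omega)
  have hprofN : ∀ U : Finset (Fin m),
      (∀ l, ((Uᶜ).filter (fun x => part x = l)).card =
        (if l = j then mi j - ki j + ti j + 1 else mi l - ki l + ti l)) ↔
      (∀ l, (U.filter (fun x => part x = l)).card =
        (if l = j then ki j - ti j - 1 else ki l - ti l)) := by
    intro U
    constructor <;> intro h l <;> (
      have h1 := hcard U l
      have h2 := h l
      have h3 := hki l
      have h4 := htk l
      by_cases hl : l = j
      · subst hl
        simp only [if_pos rfl, if_true] at h2 ⊢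
        omega
      · simp only [if_neg hl] at h2 ⊢
        omega)
  have hbz : ∀ x ∈ S, res A S x = 0 := fun x hx => res_eq_zero A hx
  have hcz : ∀ x ∈ insert i S, res (res A S) {i} x = 0 := by
    intro x hx
    rcases Finset.mem_insert.1 hx with h | h
    · subst h
      exact res_eq_zero (res A S) (Finset.mem_singleton_self x)
    · have hb : res A S x = 0 := hbz x h
      have hr : res (res A S) {i} x = res A S x -
          ((Submodule.orthogonalProjectionOnto (Submodule.span ℝ ((res A S) '' (({i} : Finset (Fin m)) :
            Set (Fin m)))) (res A S x)) : EuclideanSpace ℝ (Fin n)) := rfl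
      rw [hr, hb]
      simp
  -- denominator
  have hDen : (∑ T ∈ Finset.univ.filter (fun T : Finset (Fin m) =>
        T ⊆ Sᶜ ∧ ∀ l, (T.filter (fun x => part x = l)).card = ki l - ti l),
        gramDet A (S ∪ T))
      = gramDet A S * ∑ T ∈ Finset.univ.filter (fun T : Finset (Fin m) =>
        T ⊆ Sᶜ ∧ ∀ l, (T.filter (fun x => part x = l)).card = ki l - ti l),
        gramDet (res A S) T := by
    rw [Finset.mul_sum]
    refine Finset.sum_congr rfl fun T hT => ?_
    have hsub := (Finset.mem_filter.1 hT).2.1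
    exact gramDet_union A S T (Finset.disjoint_left.2 fun x hxS hxT =>
      (Finset.mem_compl.1 (hsub hxT)) hxS)
  -- numerator
  have hNum : (∑ T ∈ Finset.univ.filter (fun T : Finset (Fin m) =>
        T ⊆ (insert i S)ᶜ ∧ ∀ l, (T.filter (fun x => part x = l)).card =
          (if l = j then ki j - ti j - 1 else ki l - ti l)),
        gramDet A (insert i (S ∪ T)))
      = gramDet A S * (‖res A S i‖ ^ 2 *
          ∑ T ∈ Finset.univ.filter (fun T : Finset (Fin m) =>
            T ⊆ (insert i S)ᶜ ∧ ∀ l, (T.filter (fun x => part x = l)).card =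
              (if l = j then ki j - ti j - 1 else ki l - ti l)),
            gramDet (res (res A S) {i}) T) := by
    rw [Finset.mul_sum, Finset.mul_sum]
    refine Finset.sum_congr rfl fun T hT => ?_
    have hsub := (Finset.mem_filter.1 hT).2.1
    have hiT : i ∉ T := fun hiT => by
      have := hsub hiT
      simp at this
    have hTS : Disjoint S T := Finset.disjoint_left.2 fun x hxS hxT => by
      have := hsub hxT
      simp at this
      exact this.2 hxS
    have e1 : insert i (S ∪ T) = S ∪ insert i T := by rw [Finset.union_insert]
    have hdisj1 : Disjoint S (insert i T) :=
      Finset.disjoint_insert_right.2 ⟨hiS, hTS⟩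
    rw [e1, gramDet_union A S (insert i T) hdisj1]
    have e2 : insert i T = {i} ∪ T := by ext x; simp
    rw [e2, gramDet_union (res A S) {i} T (Finset.disjoint_singleton_left.2 hiT),
      gramDet_singleton]
  rw [hNum, hDen,
    sum_gramDet_eq_abs (res (res A S) {i}) part _ _ (insert i S) hcz hprofN,
    sum_gramDet_eq_abs (res A S) part _ _ S hbz hprofD,
    mul_div_mul_left _ _ hgS]
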